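/- There exist a constant C > 0 and an integer N such that for all n ≥ N and all i,j ∈ {1,…,n}: n b_n |S_d(i,j)| ≤ C, and S_d(i,j) = 0 whenever |i−j| > n b_n L. Consequently, the rows and columns of S_d have absolute sums bounded by a constant uniformly in n; that is, the family of local linear smoothing matrices S_d is AVUS. -/

import Mathlib

open MeasureTheory ProbabilityTheory Filter Matrix

noncomputable section

/-- Design points `t_i = i/n`, `i = 1,…,n` (here `0`-indexed: `dpt n i = (i+1)/n`). -/
def dpt (n : ℕ) (i : Fin n) : ℝ := ((i : ℕ) + 1) / n

/-- The rescaled kernel `K_b(t) = K(t/b)/b`. -/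
def scaledKer (K : ℝ → ℝ) (b t : ℝ) : ℝ := K (t / b) / b

/-- The `2 × 2` matrix `X(t_i)ᵀ W(t_i) X(t_i)` of local linear regression. -/
def locMat (K : ℝ → ℝ) (b : ℝ) (n : ℕ) (i : Fin n) : Matrix (Fin 2) (Fin 2) ℝ :=
  Matrix.of fun a c =>
    ∑ j : Fin n, scaledKer K b (dpt n j - dpt n i) * (dpt n j - dpt n i) ^ ((a : ℕ) + (c : ℕ))

/-- The local linear smoothing matrix `S_d`:
`S_d(i,j) = (1,0){X(tᵢ)ᵀW(tᵢ)X(tᵢ)}⁻¹(1, tⱼ-tᵢ)ᵀ K_b(tⱼ-tᵢ)`. -/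
def smoothMat (K : ℝ → ℝ) (b : ℝ) (n : ℕ) : Matrix (Fin n) (Fin n) ℝ :=
  Matrix.of fun i j =>
    ((locMat K b n i)⁻¹ *ᵥ ![1, dpt n j - dpt n i]) 0 * scaledKer K b (dpt n j - dpt n i)

lemma card_filter_le (n : ℕ) (α β : ℝ) (hαβ : α ≤ β) :
    (((Finset.univ : Finset (Fin n)).filter
        (fun j : Fin n => α ≤ ((j : ℕ) : ℝ) ∧ ((j : ℕ) : ℝ) ≤ β)).card : ℝ)
      ≤ β - α + 1 := by
  have hinj : ∀ x ∈ (Finset.univ : Finset (Fin n)).filter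
      (fun j : Fin n => α ≤ ((j : ℕ) : ℝ) ∧ ((j : ℕ) : ℝ) ≤ β),
      ((x : ℕ) : ℤ) ∈ Finset.Icc ⌈α⌉ ⌊β⌋ := by
    intro x hx
    simp only [Finset.mem_filter, Finset.mem_univ, true_and] at hx
    simp only [Finset.mem_Icc]
    exact ⟨Int.ceil_le.2 (by exact_mod_cast hx.1), Int.le_floor.2 (by exact_mod_cast hx.2)⟩
  have hcard := Finset.card_le_card_of_injOn (fun x : Fin n => ((x : ℕ) : ℤ)) hinj
    (by intro x _ y _ h; simp only at h; exact Fin.ext (by exact_mod_cast h))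
  have h2 : ((Finset.Icc ⌈α⌉ ⌊β⌋).card : ℝ) ≤ β - α + 1 := by
    rw [Int.card_Icc]
    rcases le_or_gt 0 (⌊β⌋ + 1 - ⌈α⌉ : ℤ) with h | h
    · have heq : (((⌊β⌋ + 1 - ⌈α⌉ : ℤ).toNat : ℝ)) = ((⌊β⌋ : ℝ) + 1 - (⌈α⌉ : ℝ)) := by
        rw [← Int.cast_natCast, Int.toNat_of_nonneg h]; push_cast; ring
      rw [heq]
      have := Int.floor_le β
      have := Int.le_ceil α
      linarith
    · rw [Int.toNat_of_nonpos h.le]; push_cast; linarith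
  exact le_trans (by exact_mod_cast hcard) h2

lemma card_filter_ge (n : ℕ) (α β : ℝ) (hα : 0 ≤ α) (hβ : β ≤ (n : ℝ) - 1) :
    β - α - 1 ≤
      (((Finset.univ : Finset (Fin n)).filter
        (fun j : Fin n => α ≤ ((j : ℕ) : ℝ) ∧ ((j : ℕ) : ℝ) ≤ β)).card : ℝ) := by
  rcases le_or_gt β α with h | h
  · have h1 : β - α - 1 ≤ 0 := by linarith
    exact h1.trans (by positivity)
  have hβ0 : 0 ≤ β := le_of_lt (lt_of_le_of_lt hα h)
  have hn : 0 < n := by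
    by_contra h0
    push_neg at h0
    interval_cases n
    simp at hβ; linarith
  have hmem : ∀ m ∈ Finset.Icc ⌈α⌉₊ ⌊β⌋₊, m < n := by
    intro m hm
    rw [Finset.mem_Icc] at hm
    have h1 : (m : ℝ) ≤ β := le_trans (by exact_mod_cast hm.2) (Nat.floor_le hβ0)
    have : (m : ℝ) < n := by linarith
    exact_mod_cast this
  classical
  set f : ℕ → Fin n := fun m => if hm : m < n then (⟨m, hm⟩ : Fin n) else ⟨0, hn⟩ with hf
  have hmaps : ∀ m ∈ Finset.Icc ⌈α⌉₊ ⌊β⌋₊, f m ∈ (Finset.univ : Finset (Fin n)).filter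
      (fun j : Fin n => α ≤ ((j : ℕ) : ℝ) ∧ ((j : ℕ) : ℝ) ≤ β) := by
    intro m hm
    have hmn := hmem m hm
    rw [Finset.mem_Icc] at hm
    have heq : f m = ⟨m, hmn⟩ := dif_pos hmn
    rw [heq, Finset.mem_filter]
    exact ⟨Finset.mem_univ _, le_trans (Nat.le_ceil α) (by exact_mod_cast hm.1),
      le_trans (by exact_mod_cast hm.2) (Nat.floor_le hβ0)⟩
  have hinj2 : ∀ x ∈ Finset.Icc ⌈α⌉₊ ⌊β⌋₊, ∀ y ∈ Finset.Icc ⌈α⌉₊ ⌊β⌋₊, f x = f y → x = y := by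
    intro x hx y hy hxy
    have hxn := hmem x hx; have hyn := hmem y hy
    have h1 : f x = ⟨x, hxn⟩ := dif_pos hxn
    have h2 : f y = ⟨y, hyn⟩ := dif_pos hyn
    rw [h1, h2] at hxy
    exact congrArg Fin.val hxy
  have hcard := Finset.card_le_card_of_injOn f hmaps hinj2
  have h2 : β - α - 1 ≤ ((Finset.Icc ⌈α⌉₊ ⌊β⌋₊).card : ℝ) := by
    rw [Nat.card_Icc]
    rcases le_or_gt ⌈α⌉₊ ⌊β⌋₊ with hle | hlt
    · have hle' : ⌈α⌉₊ ≤ ⌊β⌋₊ + 1 := by omega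
      have heq : ((⌊β⌋₊ + 1 - ⌈α⌉₊ : ℕ) : ℝ) = (⌊β⌋₊ : ℝ) + 1 - (⌈α⌉₊ : ℝ) := by
        push_cast [Nat.cast_sub hle']; ring
      rw [heq]
      have hf : β - 1 ≤ (⌊β⌋₊ : ℝ) := by
        have := Nat.lt_floor_add_one β; linarith
      have hc : (⌈α⌉₊ : ℝ) ≤ α + 1 := le_of_lt (Nat.ceil_lt_add_one hα)
      linarith
    · have h1 : β < (⌊β⌋₊ : ℝ) + 1 := Nat.lt_floor_add_one β
      have h2' : ((⌊β⌋₊ : ℕ) : ℝ) + 1 ≤ (⌈α⌉₊ : ℝ) := by exact_mod_cast hlt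
      have h3 : (⌈α⌉₊ : ℝ) ≤ α + 1 := le_of_lt (Nat.ceil_lt_add_one hα)
      have : β - α - 1 < 0 := by linarith
      exact this.le.trans (by positivity)
  exact h2.trans (by exact_mod_cast hcard)

lemma det_lower {n : ℕ} (a x : Fin n → ℝ) (ha : ∀ j, 0 ≤ a j)
    (P Q : Finset (Fin n)) (κ : ℝ) (hκ : 0 < κ)
    (hPa : ∀ p ∈ P, κ ≤ a p) (hQa : ∀ q ∈ Q, κ ≤ a q)
    (m g : ℝ) (hg : 0 < g)
    (hP : ∀ p ∈ P, x p ≤ m) (hQ : ∀ q ∈ Q, m + g ≤ x q)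
    (c : ℝ) (hc : 0 < c) (hcP : c ≤ (P.card : ℝ)) (hcQ : c ≤ (Q.card : ℝ)) :
    c ^ 2 * κ ^ 2 * (g / 2) ^ 2 ≤
      (∑ j, a j) * (∑ j, a j * x j ^ 2) - (∑ j, a j * x j) ^ 2 := by
  classical
  set S0 := ∑ j, a j with hS0def
  set S1 := ∑ j, a j * x j with hS1def
  set S2 := ∑ j, a j * x j ^ 2 with hS2def
  have hsub : ∀ R : Finset (Fin n), (∀ p ∈ R, κ ≤ a p) → c ≤ (R.card : ℝ) →
      c * κ ≤ ∑ j ∈ R, a j := by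
    intro R hR hcR
    calc c * κ ≤ (R.card : ℝ) * κ := by nlinarith
      _ = ∑ j ∈ R, κ := by rw [Finset.sum_const, nsmul_eq_mul]
      _ ≤ ∑ j ∈ R, a j := Finset.sum_le_sum hR
  have hS0P : c * κ ≤ S0 := by
    refine le_trans (hsub P hPa hcP) ?_
    exact Finset.sum_le_sum_of_subset_of_nonneg (Finset.subset_univ P) (fun j _ _ => ha j)
  have hS0pos : 0 < S0 := lt_of_lt_of_le (by positivity) hS0P
  set μ := S1 / S0 with hμdef
  have hkey : S0 * S2 - S1 ^ 2 = S0 * ∑ j, a j * (x j - μ) ^ 2 := by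
    have hexp : ∑ j, a j * (x j - μ) ^ 2 = S2 - 2 * μ * S1 + μ ^ 2 * S0 := by
      rw [hS2def, hS1def, hS0def, Finset.mul_sum, Finset.mul_sum, ← Finset.sum_sub_distrib,
        ← Finset.sum_add_distrib]
      exact Finset.sum_congr rfl fun j _ => by ring
    rw [hexp, hμdef]
    field_simp
    ring
  rw [hkey]
  -- lower bound the variance sum
  have hvar : c * κ * (g / 2) ^ 2 ≤ ∑ j, a j * (x j - μ) ^ 2 := by
    have hbound : ∀ R : Finset (Fin n), (∀ p ∈ R, κ ≤ a p) → c ≤ (R.card : ℝ) →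
        (∀ p ∈ R, g / 2 ≤ |x p - μ|) → c * κ * (g / 2) ^ 2 ≤ ∑ j, a j * (x j - μ) ^ 2 := by
      intro R hR hcR hfar
      have h1 : c * κ * (g / 2) ^ 2 ≤ ∑ j ∈ R, a j * (x j - μ) ^ 2 := by
        calc c * κ * (g / 2) ^ 2 = c * (κ * (g / 2) ^ 2) := by ring
          _ ≤ (R.card : ℝ) * (κ * (g / 2) ^ 2) :=
              mul_le_mul_of_nonneg_right hcR (by positivity)
          _ = ∑ j ∈ R, κ * (g / 2) ^ 2 := by rw [Finset.sum_const, nsmul_eq_mul]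
          _ ≤ ∑ j ∈ R, a j * (x j - μ) ^ 2 := by
              refine Finset.sum_le_sum fun j hj => ?_
              have h2 : (g / 2) ^ 2 ≤ (x j - μ) ^ 2 := by
                have := hfar j hj
                have := sq_abs (x j - μ)
                nlinarith [abs_nonneg (x j - μ)]
              have := hR j hj
              nlinarith [ha j, hκ.le, hg.le]
      refine h1.trans (Finset.sum_le_sum_of_subset_of_nonneg (Finset.subset_univ R)
        fun j _ _ => mul_nonneg (ha j) (sq_nonneg _))
    rcases le_or_gt μ (m + g / 2) with hμ | hμ
    · refine hbound Q hQa hcQ fun q hq => ?_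
      have := hQ q hq
      rw [abs_of_nonneg (by linarith)]
      linarith
    · refine hbound P hPa hcP fun p hp => ?_
      have := hP p hp
      rw [abs_of_nonpos (by linarith)]
      linarith
  calc c ^ 2 * κ ^ 2 * (g / 2) ^ 2 = (c * κ) * (c * κ * (g / 2) ^ 2) := by ring
    _ ≤ S0 * ∑ j, a j * (x j - μ) ^ 2 := by
        refine mul_le_mul hS0P hvar (by positivity) hS0pos.le

lemma dpt_sub (n : ℕ) (i j : Fin n) :
    dpt n j - dpt n i = (((j : ℕ) : ℝ) - ((i : ℕ) : ℝ)) / n := by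
  unfold dpt; ring

lemma locMat_det (K : ℝ → ℝ) (b : ℝ) (n : ℕ) (i : Fin n) :
    (locMat K b n i).det =
      (∑ j : Fin n, scaledKer K b (dpt n j - dpt n i)) *
        (∑ j : Fin n, scaledKer K b (dpt n j - dpt n i) * (dpt n j - dpt n i) ^ 2) -
      (∑ j : Fin n, scaledKer K b (dpt n j - dpt n i) * (dpt n j - dpt n i)) ^ 2 := by
  rw [Matrix.det_fin_two]
  simp only [locMat, Matrix.of_apply]
  norm_num [sq]

lemma smoothMat_eq (K : ℝ → ℝ) (b : ℝ) (n : ℕ) (i j : Fin n)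
    (hdet : (locMat K b n i).det ≠ 0) :
    smoothMat K b n i j =
      ((∑ k : Fin n, scaledKer K b (dpt n k - dpt n i) * (dpt n k - dpt n i) ^ 2) -
        (dpt n j - dpt n i) *
          (∑ k : Fin n, scaledKer K b (dpt n k - dpt n i) * (dpt n k - dpt n i))) /
        (locMat K b n i).det * scaledKer K b (dpt n j - dpt n i) := by
  have hinv : (locMat K b n i)⁻¹ =
      ((locMat K b n i).det)⁻¹ • !![locMat K b n i 1 1, -(locMat K b n i 0 1);
        -(locMat K b n i 1 0), locMat K b n i 0 0] := by
    rw [Matrix.inv_def, Matrix.adjugate_fin_two, Ring.inverse_eq_inv']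
  rw [smoothMat, Matrix.of_apply, hinv]
  simp only [Matrix.smul_mulVec, Pi.smul_apply, smul_eq_mul,
    Matrix.mulVec, dotProduct, Fin.sum_univ_two]
  simp only [Matrix.cons_val', Matrix.cons_val_zero, Matrix.cons_val_one, Matrix.head_cons,
    Matrix.empty_val', Matrix.cons_val_fin_one, Matrix.head_fin_const]
  have h01 : locMat K b n i 0 1 = ∑ k : Fin n, scaledKer K b (dpt n k - dpt n i) * (dpt n k - dpt n i) := by
    simp only [locMat, Matrix.of_apply]; norm_num
  have h11 : locMat K b n i 1 1 = ∑ k : Fin n, scaledKer K b (dpt n k - dpt n i) * (dpt n k - dpt n i) ^ 2 := by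
    simp only [locMat, Matrix.of_apply]; norm_num [sq]
  rw [h01, h11]
  field_simp
  simp only [Matrix.smul_apply, Matrix.of_apply, Matrix.cons_val', Matrix.cons_val_zero,
    Matrix.cons_val_one, Matrix.head_cons, Matrix.empty_val', Matrix.cons_val_fin_one, smul_eq_mul]
  field_simp
  ring

lemma det_grid {n : ℕ} (i : Fin n) (b δ κb : ℝ) (hb : 0 < b) (hδ : 0 < δ)
    (hκb : 0 < κb) (hn : 0 < (n : ℝ))
    (a x : Fin n → ℝ) (ha : ∀ j, 0 ≤ a j)
    (hx : ∀ j, x j = (((j : ℕ) : ℝ) - ((i : ℕ) : ℝ)) / n)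
    (α : ℝ) (hα0 : 0 ≤ α) (hαn : α + (n : ℝ) * b * δ ≤ (n : ℝ) - 1)
    (haκ : ∀ j : Fin n, α ≤ ((j : ℕ) : ℝ) → ((j : ℕ) : ℝ) ≤ α + (n : ℝ) * b * δ → κb ≤ a j)
    (hnbδ : 6 ≤ (n : ℝ) * b * δ) :
    ((n : ℝ) * b * δ / 6) ^ 2 * κb ^ 2 * (b * δ / 6) ^ 2 ≤
      (∑ j : Fin n, a j) * (∑ j : Fin n, a j * x j ^ 2) - (∑ j : Fin n, a j * x j) ^ 2 := by
  classical
  have hnb : 0 < (n : ℝ) * b := by positivity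
  set P : Finset (Fin n) := Finset.univ.filter
    (fun j : Fin n => α ≤ ((j : ℕ) : ℝ) ∧ ((j : ℕ) : ℝ) ≤ α + (n : ℝ) * b * δ / 3) with hPdef
  set Q : Finset (Fin n) := Finset.univ.filter
    (fun j : Fin n => α + 2 * ((n : ℝ) * b * δ) / 3 ≤ ((j : ℕ) : ℝ)
      ∧ ((j : ℕ) : ℝ) ≤ α + (n : ℝ) * b * δ) with hQdef
  have hPcard : (n : ℝ) * b * δ / 6 ≤ (P.card : ℝ) := by
    have := card_filter_ge n α (α + (n : ℝ) * b * δ / 3) hα0 (by nlinarith)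
    linarith
  have hQcard : (n : ℝ) * b * δ / 6 ≤ (Q.card : ℝ) := by
    have := card_filter_ge n (α + 2 * ((n : ℝ) * b * δ) / 3) (α + (n : ℝ) * b * δ)
      (by nlinarith) (by linarith)
    linarith
  have hPa : ∀ p ∈ P, κb ≤ a p := by
    intro p hp
    rw [hPdef, Finset.mem_filter] at hp
    exact haκ p hp.2.1 (by linarith [hp.2.2])
  have hQa : ∀ q ∈ Q, κb ≤ a q := by
    intro q hq
    rw [hQdef, Finset.mem_filter] at hq
    exact haκ q (by nlinarith [hq.2.1]) hq.2.2
  have hPx : ∀ p ∈ P, x p ≤ (α + (n : ℝ) * b * δ / 3 - ((i : ℕ) : ℝ)) / n := by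
    intro p hp
    rw [hPdef, Finset.mem_filter] at hp
    rw [hx p]
    exact (div_le_div_iff_of_pos_right hn).mpr (by linarith [hp.2.2])
  have hQx : ∀ q ∈ Q, (α + (n : ℝ) * b * δ / 3 - ((i : ℕ) : ℝ)) / n + b * δ / 3 ≤ x q := by
    intro q hq
    rw [hQdef, Finset.mem_filter] at hq
    rw [hx q]
    rw [div_add' _ _ _ (ne_of_gt hn), div_le_div_iff₀ hn hn]
    have h1 := hq.2.1
    nlinarith [hn]
  have := det_lower a x ha P Q κb hκb hPa hQa
    ((α + (n : ℝ) * b * δ / 3 - ((i : ℕ) : ℝ)) / n) (b * δ / 3) (by positivity)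
    hPx hQx ((n : ℝ) * b * δ / 6) (by positivity) hPcard hQcard
  calc ((n : ℝ) * b * δ / 6) ^ 2 * κb ^ 2 * (b * δ / 6) ^ 2
      = ((n : ℝ) * b * δ / 6) ^ 2 * κb ^ 2 * ((b * δ / 3) / 2) ^ 2 := by ring
    _ ≤ _ := this

lemma det_bound (K : ℝ → ℝ) (t₀ δ κ b : ℝ) (hδ : 0 < δ) (hκ : 0 < κ) (hb : 0 < b)
    (ht₀ : 0 ≤ t₀)
    (hKκ : ∀ u, t₀ ≤ u → u ≤ t₀ + δ → κ ≤ K u)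
    (hK_symm : ∀ t, K (-t) = K t)
    (hK_nonneg : ∀ t, 0 ≤ K t)
    (n : ℕ) (i : Fin n)
    (hnbδ : 6 ≤ (n : ℝ) * b * δ)
    (hside : (n : ℝ) * b * (t₀ + δ) ≤ max (((i : ℕ) : ℝ)) ((n : ℝ) - 1 - ((i : ℕ) : ℝ))) :
    ((n : ℝ) * b) ^ 2 * κ ^ 2 * δ ^ 4 / 1296 ≤
      (∑ j : Fin n, scaledKer K b (dpt n j - dpt n i)) *
        (∑ j : Fin n, scaledKer K b (dpt n j - dpt n i) * (dpt n j - dpt n i) ^ 2) -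
      (∑ j : Fin n, scaledKer K b (dpt n j - dpt n i) * (dpt n j - dpt n i)) ^ 2 := by
  classical
  have hn : 0 < (n : ℝ) := by
    rcases Nat.eq_zero_or_pos n with h | h
    · exact absurd i.2 (by omega)
    · exact_mod_cast h
  have hnb : 0 < (n : ℝ) * b := by positivity
  set a : Fin n → ℝ := fun j => scaledKer K b (dpt n j - dpt n i) with hadef
  set x : Fin n → ℝ := fun j => dpt n j - dpt n i with hxdef
  have ha : ∀ j, 0 ≤ a j := fun j => div_nonneg (hK_nonneg _) hb.le
  have hxval : ∀ j : Fin n, x j = (((j : ℕ) : ℝ) - ((i : ℕ) : ℝ)) / n := fun j => dpt_sub n i j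
  have hcval : (n : ℝ) * b * δ / 3 - 1 ≥ (n : ℝ) * b * δ / 6 := by linarith
  have hi1 : ((i : ℕ) : ℝ) ≤ (n : ℝ) - 1 := by
    have := i.2
    have : ((i : ℕ) : ℝ) ≤ (n : ℝ) - 1 := by
      have h2 : (i : ℕ) + 1 ≤ n := i.2
      have := (Nat.cast_le (α := ℝ)).2 h2
      push_cast at this; linarith
    exact this
  have hi0 : (0 : ℝ) ≤ ((i : ℕ) : ℝ) := Nat.cast_nonneg _
  have hκb : (0 : ℝ) < κ / b := by positivity
  have key : ∀ α : ℝ, 0 ≤ α → α + (n : ℝ) * b * δ ≤ (n : ℝ) - 1 →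
      (∀ j : Fin n, α ≤ ((j : ℕ) : ℝ) → ((j : ℕ) : ℝ) ≤ α + (n : ℝ) * b * δ →
        κ / b ≤ a j) →
      ((n : ℝ) * b) ^ 2 * κ ^ 2 * δ ^ 4 / 1296 ≤
        (∑ j : Fin n, a j) * (∑ j : Fin n, a j * x j ^ 2) - (∑ j : Fin n, a j * x j) ^ 2 := by
    intro α hα0 hαn haκ
    have := det_grid i b δ (κ / b) hb hδ hκb hn a x ha hxval α hα0 hαn haκ hnbδ
    calc ((n : ℝ) * b) ^ 2 * κ ^ 2 * δ ^ 4 / 1296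
        = ((n : ℝ) * b * δ / 6) ^ 2 * (κ / b) ^ 2 * (b * δ / 6) ^ 2 := by
          field_simp; ring
      _ ≤ _ := this
  rcases le_max_iff.mp hside with hR | hL
  · -- left side: α = i - n b (t₀ + δ)
    refine key (((i : ℕ) : ℝ) - (n : ℝ) * b * (t₀ + δ)) (by linarith) (by nlinarith) ?_
    intro j h1 h2
    have hu1 : -(t₀ + δ) ≤ x j / b := by
      rw [hxval j, div_div]
      rw [le_div_iff₀ hnb]
      nlinarith
    have hu2 : x j / b ≤ -t₀ := by
      rw [hxval j, div_div, div_le_iff₀ hnb]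
      nlinarith
    have hK : κ ≤ K (x j / b) := by
      rw [← hK_symm (x j / b)]
      exact hKκ (-(x j / b)) (by linarith) (by linarith)
    have : a j = K (x j / b) / b := rfl
    rw [this]
    exact (div_le_div_iff_of_pos_right hb).mpr hK
  · -- right side: α = i + n b t₀
    refine key (((i : ℕ) : ℝ) + (n : ℝ) * b * t₀) (by positivity) (by nlinarith) ?_
    intro j h1 h2
    have hu1 : t₀ ≤ x j / b := by
      rw [hxval j, div_div, le_div_iff₀ hnb]
      nlinarith
    have hu2 : x j / b ≤ t₀ + δ := by
      rw [hxval j, div_div, div_le_iff₀ hnb]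
      nlinarith
    have hK : κ ≤ K (x j / b) := hKκ (x j / b) hu1 hu2
    have : a j = K (x j / b) / b := rfl
    rw [this]
    exact (div_le_div_iff_of_pos_right hb).mpr hK

lemma sum_upper (K : ℝ → ℝ) (L CB b : ℝ) (hL : 0 < L) (hb : 0 < b)
    (hK_bdd : ∀ t, K t ≤ CB) (hK_nonneg : ∀ t, 0 ≤ K t)
    (hK_supp : ∀ t, L < |t| → K t = 0)
    (n : ℕ) (hn : 0 < n) (i : Fin n) (k : ℕ) :
    ∑ j : Fin n, scaledKer K b (dpt n j - dpt n i) * |dpt n j - dpt n i| ^ k ≤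
      CB / b * (b * L) ^ k * (2 * ((n : ℝ) * b * L) + 1) := by
  classical
  have hnR : 0 < (n : ℝ) := by exact_mod_cast hn
  have hnb : 0 < (n : ℝ) * b := by positivity
  set a : Fin n → ℝ := fun j => scaledKer K b (dpt n j - dpt n i) with hadef
  set F : Finset (Fin n) := Finset.univ.filter
    (fun j : Fin n => ((i : ℕ) : ℝ) - (n : ℝ) * b * L ≤ ((j : ℕ) : ℝ)
      ∧ ((j : ℕ) : ℝ) ≤ ((i : ℕ) : ℝ) + (n : ℝ) * b * L) with hFdef
  have hzero : ∀ j : Fin n, j ∉ F → a j * |dpt n j - dpt n i| ^ k = 0 := by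
    intro j hj
    rw [hFdef, Finset.mem_filter] at hj
    push_neg at hj
    have hj2 := hj (Finset.mem_univ j)
    have habs : (n : ℝ) * b * L < |((j : ℕ) : ℝ) - ((i : ℕ) : ℝ)| := by
      rcases lt_or_ge (((j : ℕ) : ℝ)) (((i : ℕ) : ℝ) - (n : ℝ) * b * L) with h | h
      · rw [abs_sub_comm, abs_of_pos (by nlinarith)]; linarith
      · have := hj2 h
        rw [abs_of_pos (by nlinarith)]; linarith
    have hK0 : K ((dpt n j - dpt n i) / b) = 0 := by
      apply hK_supp
      rw [dpt_sub, div_div, abs_div, abs_of_pos hnb, lt_div_iff₀ hnb]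
      nlinarith
    have : a j = 0 := by rw [hadef]; simp [scaledKer, hK0]
    rw [this, zero_mul]
  have hsum : ∑ j : Fin n, a j * |dpt n j - dpt n i| ^ k
      = ∑ j ∈ F, a j * |dpt n j - dpt n i| ^ k := by
    rw [← Finset.sum_subset (Finset.subset_univ F) (fun j _ hj => hzero j hj)]
  rw [hsum]
  have hterm : ∀ j ∈ F, a j * |dpt n j - dpt n i| ^ k ≤ CB / b * (b * L) ^ k := by
    intro j hj
    rw [hFdef, Finset.mem_filter] at hj
    have hxb : |dpt n j - dpt n i| ≤ b * L := by
      rw [dpt_sub, abs_div, abs_of_pos hnR, div_le_iff₀ hnR]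
      rw [abs_le]
      constructor <;> nlinarith [hj.2.1, hj.2.2]
    have ha_le : a j ≤ CB / b := by
      show K ((dpt n j - dpt n i) / b) / b ≤ CB / b
      exact (div_le_div_iff_of_pos_right hb).mpr (hK_bdd _)
    have ha_nn : 0 ≤ a j := div_nonneg (hK_nonneg _) hb.le
    have hxk : |dpt n j - dpt n i| ^ k ≤ (b * L) ^ k :=
      pow_le_pow_left₀ (abs_nonneg _) hxb k
    have hCBb : 0 ≤ CB / b := le_trans ha_nn ha_le
    exact mul_le_mul ha_le hxk (by positivity) hCBb
  calc ∑ j ∈ F, a j * |dpt n j - dpt n i| ^ k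
      ≤ ∑ j ∈ F, CB / b * (b * L) ^ k := Finset.sum_le_sum hterm
    _ = (F.card : ℝ) * (CB / b * (b * L) ^ k) := by rw [Finset.sum_const, nsmul_eq_mul]
    _ ≤ (2 * ((n : ℝ) * b * L) + 1) * (CB / b * (b * L) ^ k) := by
        have hcard := card_filter_le n (((i : ℕ) : ℝ) - (n : ℝ) * b * L)
          (((i : ℕ) : ℝ) + (n : ℝ) * b * L) (by nlinarith)
        have h2 : (F.card : ℝ) ≤ 2 * ((n : ℝ) * b * L) + 1 := by
          rw [hFdef]
          refine hcard.trans ?_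
          ring_nf
          linarith
        have hpos : (0 : ℝ) ≤ CB / b * (b * L) ^ k := by
          have : (0:ℝ) ≤ CB := le_trans (hK_nonneg 0) (hK_bdd 0)
          positivity
        exact mul_le_mul_of_nonneg_right h2 hpos
    _ = CB / b * (b * L) ^ k * (2 * ((n : ℝ) * b * L) + 1) := by ring

lemma smoothMat_supp (K : ℝ → ℝ) (L : ℝ) (hK_supp : ∀ t, L < |t| → K t = 0)
    (b : ℝ) (hb : 0 < b) (n : ℕ) (i j : Fin n)
    (h : (n : ℝ) * b * L < |((i : ℕ) : ℝ) - ((j : ℕ) : ℝ)|) :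
    smoothMat K b n i j = 0 := by
  have hn : 0 < (n : ℝ) := by
    rcases Nat.eq_zero_or_pos n with h0 | h0
    · exact absurd i.2 (by omega)
    · exact_mod_cast h0
  have hnb : 0 < (n : ℝ) * b := by positivity
  have hK0 : K ((dpt n j - dpt n i) / b) = 0 := by
    apply hK_supp
    rw [dpt_sub, div_div, abs_div, abs_of_pos hnb, lt_div_iff₀ hnb]
    rw [abs_sub_comm] at h
    nlinarith [h, abs_nonneg (((j : ℕ) : ℝ) - ((i : ℕ) : ℝ))]
  show _ * scaledKer K b (dpt n j - dpt n i) = 0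
  rw [scaledKer, hK0, zero_div, mul_zero]

/-- Main entry bound. -/
lemma entry_bound (K : ℝ → ℝ) (L : ℝ) (hL : 0 < L)
    (hK_symm : ∀ t, K (-t) = K t)
    (CB : ℝ) (hK_bdd : ∀ t, K t ≤ CB) (hK_nonneg : ∀ t, 0 ≤ K t)
    (hK_supp : ∀ t, L < |t| → K t = 0)
    (t₀ δ κ : ℝ) (ht₀ : 0 ≤ t₀) (hδ : 0 < δ) (hκ : 0 < κ)
    (ht₀δL : t₀ + δ ≤ L)
    (hKκ : ∀ u, t₀ ≤ u → u ≤ t₀ + δ → κ ≤ K u)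
    (b : ℝ) (hb : 0 < b) (n : ℕ)
    (hnb1 : 1 ≤ (n : ℝ) * b)
    (hnbδ : 6 ≤ (n : ℝ) * b * δ)
    (hcov : (n : ℝ) * b * (t₀ + δ) ≤ ((n : ℝ) - 1) / 2)
    (i j : Fin n) :
    (n : ℝ) * b * |smoothMat K b n i j| ≤
      2592 * CB ^ 2 * L ^ 2 * (2 * L + 1) / (κ ^ 2 * δ ^ 4) := by
  have hn : 0 < n := by
    rcases Nat.eq_zero_or_pos n with h0 | h0
    · exact absurd i.2 (by omega)
    · exact h0
  have hnR : 0 < (n : ℝ) := by exact_mod_cast hn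
  have hnb : 0 < (n : ℝ) * b := by positivity
  have hCB : 0 < CB := lt_of_lt_of_le hκ (le_trans (hKκ t₀ le_rfl (by linarith)) (hK_bdd t₀))
  set S0 := ∑ k : Fin n, scaledKer K b (dpt n k - dpt n i) with hS0
  set S1 := ∑ k : Fin n, scaledKer K b (dpt n k - dpt n i) * (dpt n k - dpt n i) with hS1
  set S2 := ∑ k : Fin n, scaledKer K b (dpt n k - dpt n i) * (dpt n k - dpt n i) ^ 2 with hS2
  have hside : (n : ℝ) * b * (t₀ + δ) ≤ max (((i : ℕ) : ℝ)) ((n : ℝ) - 1 - ((i : ℕ) : ℝ)) := by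
    have hi1 : ((i : ℕ) : ℝ) ≤ (n : ℝ) - 1 := by
      have h2 : (i : ℕ) + 1 ≤ n := i.2
      have := (Nat.cast_le (α := ℝ)).2 h2
      push_cast at this; linarith
    rcases le_total (((i : ℕ) : ℝ)) (((n : ℝ) - 1) / 2) with h | h
    · exact le_trans (by linarith) (le_max_right _ _)
    · exact le_trans (by linarith) (le_max_left _ _)
  have hdet_lb : ((n : ℝ) * b) ^ 2 * κ ^ 2 * δ ^ 4 / 1296 ≤ (locMat K b n i).det := by
    rw [locMat_det]
    exact det_bound K t₀ δ κ b hδ hκ hb ht₀ hKκ hK_symm hK_nonneg n i hnbδ hside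
  have hD : (0 : ℝ) < ((n : ℝ) * b) ^ 2 * κ ^ 2 * δ ^ 4 / 1296 := by positivity
  have hdet_pos : 0 < (locMat K b n i).det := lt_of_lt_of_le hD hdet_lb
  rw [smoothMat_eq K b n i j hdet_pos.ne']
  rcases eq_or_ne (scaledKer K b (dpt n j - dpt n i)) 0 with ha0 | ha0
  · rw [ha0, mul_zero, abs_zero, mul_zero]
    positivity
  -- a j ≠ 0, so |x j| ≤ b * L
  have hxL : |dpt n j - dpt n i| ≤ b * L := by
    by_contra hc
    push_neg at hc
    exact ha0 (by
      rw [scaledKer, hK_supp _ (by rw [abs_div, abs_of_pos hb, lt_div_iff₀ hb]; nlinarith),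
        zero_div])
  have haub : scaledKer K b (dpt n j - dpt n i) ≤ CB / b :=
    (div_le_div_iff_of_pos_right hb).mpr (hK_bdd _)
  have hann : 0 ≤ scaledKer K b (dpt n j - dpt n i) := div_nonneg (hK_nonneg _) hb.le
  -- numerator bound
  have hS2b : |S2| ≤ CB / b * (b * L) ^ 2 * (2 * ((n : ℝ) * b * L) + 1) := by
    rw [hS2]
    refine le_trans (Finset.abs_sum_le_sum_abs _ _) ?_
    refine le_trans (Finset.sum_le_sum (fun k _ => ?_)) (sum_upper K L CB b hL hb hK_bdd hK_nonneg hK_supp n hn i 2)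
    rw [abs_mul, abs_of_nonneg (show (0:ℝ) ≤ scaledKer K b (dpt n k - dpt n i) from
      div_nonneg (hK_nonneg _) hb.le), abs_pow]
  have hS1b : |S1| ≤ CB / b * (b * L) ^ 1 * (2 * ((n : ℝ) * b * L) + 1) := by
    rw [hS1]
    refine le_trans (Finset.abs_sum_le_sum_abs _ _) ?_
    refine le_trans (Finset.sum_le_sum (fun k _ => ?_)) (sum_upper K L CB b hL hb hK_bdd hK_nonneg hK_supp n hn i 1)
    rw [abs_mul, abs_of_nonneg (show (0:ℝ) ≤ scaledKer K b (dpt n k - dpt n i) from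
      div_nonneg (hK_nonneg _) hb.le), pow_one]
  have hnum : |S2 - (dpt n j - dpt n i) * S1| ≤ 2 * CB * b * L ^ 2 * ((n : ℝ) * b) * (2 * L + 1) := by
    have h1 : |S2 - (dpt n j - dpt n i) * S1| ≤ |S2| + |dpt n j - dpt n i| * |S1| := by
      refine le_trans (abs_sub _ _) ?_
      rw [abs_mul]
    have h2 : |dpt n j - dpt n i| * |S1| ≤ (b * L) * (CB / b * (b * L) ^ 1 * (2 * ((n : ℝ) * b * L) + 1)) :=
      mul_le_mul hxL hS1b (abs_nonneg _) (by positivity)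
    have h3 : 2 * ((n : ℝ) * b * L) + 1 ≤ (n : ℝ) * b * (2 * L + 1) := by nlinarith
    have h4 : CB / b * (b * L) ^ 2 = CB * b * L ^ 2 := by field_simp
    calc |S2 - (dpt n j - dpt n i) * S1| ≤ |S2| + |dpt n j - dpt n i| * |S1| := h1
      _ ≤ CB / b * (b * L) ^ 2 * (2 * ((n : ℝ) * b * L) + 1)
          + (b * L) * (CB / b * (b * L) ^ 1 * (2 * ((n : ℝ) * b * L) + 1)) := add_le_add hS2b h2
      _ = 2 * (CB * b * L ^ 2) * (2 * ((n : ℝ) * b * L) + 1) := by field_simp; ring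
      _ ≤ 2 * (CB * b * L ^ 2) * ((n : ℝ) * b * (2 * L + 1)) := by
          refine mul_le_mul_of_nonneg_left h3 (by positivity)
      _ = 2 * CB * b * L ^ 2 * ((n : ℝ) * b) * (2 * L + 1) := by ring
  -- put it together
  rw [abs_mul, abs_div, abs_of_pos hdet_pos, abs_of_nonneg hann]
  have hfrac : |S2 - (dpt n j - dpt n i) * S1| / (locMat K b n i).det ≤
      (2 * CB * b * L ^ 2 * ((n : ℝ) * b) * (2 * L + 1)) / (((n : ℝ) * b) ^ 2 * κ ^ 2 * δ ^ 4 / 1296) :=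
    div_le_div₀ (by positivity) hnum hD hdet_lb
  calc (n : ℝ) * b * (|S2 - (dpt n j - dpt n i) * S1| / (locMat K b n i).det
        * scaledKer K b (dpt n j - dpt n i))
      ≤ (n : ℝ) * b * ((2 * CB * b * L ^ 2 * ((n : ℝ) * b) * (2 * L + 1)) /
          (((n : ℝ) * b) ^ 2 * κ ^ 2 * δ ^ 4 / 1296) * (CB / b)) := by
        refine mul_le_mul_of_nonneg_left ?_ hnb.le
        exact mul_le_mul hfrac haub hann (by positivity)
    _ = 2592 * CB ^ 2 * L ^ 2 * (2 * L + 1) / (κ ^ 2 * δ ^ 4) := by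
        field_simp
        ring

lemma kernel_window (K : ℝ → ℝ) (L : ℝ) (hL : 0 < L)
    (hK_symm : ∀ t, K (-t) = K t) (CK : NNReal) (hK_lip : LipschitzWith CK K)
    (hK_nonneg : ∀ t, 0 ≤ K t) (hK_supp : ∀ t, L < |t| → K t = 0)
    (hK_int : ∫ t, K t = 1) :
    ∃ t₀ δ κ : ℝ, 0 ≤ t₀ ∧ 0 < δ ∧ 0 < κ ∧ t₀ + δ ≤ L ∧
      ∀ u, t₀ ≤ u → u ≤ t₀ + δ → κ ≤ K u := by
  -- find a point where K is positive
  have hs : ∃ s, 0 < K s := by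
    by_contra hc
    push_neg at hc
    have hK0 : K = fun _ => 0 := funext fun t => le_antisymm (hc t) (hK_nonneg t)
    rw [hK0] at hK_int
    simp at hK_int
  obtain ⟨s, hs⟩ := hs
  set t₀ : ℝ := |s| with ht₀def
  have hKt₀ : 0 < K t₀ := by
    rcases abs_choice s with h | h
    · rwa [ht₀def, h]
    · rw [ht₀def, h, ← hK_symm]; simpa using hs
  set δ : ℝ := K t₀ / (2 * ((CK : ℝ) + 1)) with hδdef
  have hδ : 0 < δ := by positivity
  set κ : ℝ := K t₀ / 2 with hκdef
  have hκ : 0 < κ := by positivity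
  have hwin : ∀ u, t₀ ≤ u → u ≤ t₀ + δ → κ ≤ K u := by
    intro u h1 h2
    have hlip := hK_lip.dist_le_mul u t₀
    rw [Real.dist_eq, Real.dist_eq] at hlip
    have h3 : |u - t₀| ≤ δ := by rw [abs_of_nonneg (by linarith)]; linarith
    have h4 : |K u - K t₀| ≤ (CK : ℝ) * δ := le_trans hlip
      (mul_le_mul_of_nonneg_left h3 CK.coe_nonneg)
    have heq : ((CK : ℝ) + 1) * δ = K t₀ / 2 := by
      rw [hδdef]; field_simp
    have h5 : (CK : ℝ) * δ ≤ K t₀ / 2 := by nlinarith [hδ, CK.coe_nonneg]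
    rw [abs_sub_comm] at h4
    have h6 : K t₀ - K u ≤ K t₀ / 2 := le_trans (le_trans (le_abs_self _) h4) h5
    rw [hκdef]
    linarith
  have ht₀L : t₀ + δ ≤ L := by
    by_contra hc
    push_neg at hc
    have := hK_supp (t₀ + δ) (by rw [abs_of_nonneg (by positivity)]; exact hc)
    have := hwin (t₀ + δ) (by linarith) le_rfl
    linarith
  exact ⟨t₀, δ, κ, abs_nonneg s, hδ, hκ, ht₀L, hwin⟩

lemma band_sum (n : ℕ) (f : Fin n → ℝ) (C L nb : ℝ) (hC : 0 < C) (hL : 0 < L)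
    (hnb1 : 1 ≤ nb) (i₀ : ℝ)
    (hent : ∀ j, nb * |f j| ≤ C)
    (hsupp : ∀ j : Fin n, nb * L < |i₀ - ((j : ℕ) : ℝ)| → f j = 0) :
    ∑ j, |f j| ≤ C * (2 * L + 1) := by
  classical
  have hnb : 0 < nb := lt_of_lt_of_le one_pos hnb1
  set F : Finset (Fin n) := Finset.univ.filter
    (fun j : Fin n => i₀ - nb * L ≤ ((j : ℕ) : ℝ) ∧ ((j : ℕ) : ℝ) ≤ i₀ + nb * L) with hFdef
  have hzero : ∀ j : Fin n, j ∉ F → |f j| = 0 := by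
    intro j hj
    rw [hFdef, Finset.mem_filter] at hj
    push_neg at hj
    have hj2 := hj (Finset.mem_univ j)
    have : nb * L < |i₀ - ((j : ℕ) : ℝ)| := by
      rcases lt_or_ge (((j : ℕ) : ℝ)) (i₀ - nb * L) with h | h
      · rw [abs_of_pos (by nlinarith)]; linarith
      · have := hj2 h
        rw [abs_of_neg (by nlinarith)]; linarith
    rw [hsupp j this, abs_zero]
  have hsum : ∑ j : Fin n, |f j| = ∑ j ∈ F, |f j| :=
    (Finset.sum_subset (Finset.subset_univ F) (fun j _ hj => hzero j hj)).symm
  rw [hsum]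
  have hterm : ∀ j ∈ F, |f j| ≤ C / nb := by
    intro j _
    rw [le_div_iff₀ hnb]
    calc |f j| * nb = nb * |f j| := by ring
      _ ≤ C := hent j
  calc ∑ j ∈ F, |f j| ≤ ∑ j ∈ F, C / nb := Finset.sum_le_sum hterm
    _ = (F.card : ℝ) * (C / nb) := by rw [Finset.sum_const, nsmul_eq_mul]
    _ ≤ (2 * (nb * L) + 1) * (C / nb) := by
        refine mul_le_mul_of_nonneg_right ?_ (by positivity)
        have := card_filter_le n (i₀ - nb * L) (i₀ + nb * L) (by nlinarith)
        rw [hFdef]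
        refine this.trans ?_
        ring_nf
        linarith
    _ = 2 * L * C + C / nb := by field_simp
    _ ≤ C * (2 * L + 1) := by
        have : C / nb ≤ C := by
          rw [div_le_iff₀ hnb]; nlinarith
        linarith

theorem statement9 (K : ℝ → ℝ) (L : ℝ) (hL : 0 < L)
    (hK_symm : ∀ t, K (-t) = K t) (CK : NNReal) (hK_lip : LipschitzWith CK K)
    (CB : ℝ) (hK_bdd : ∀ t, K t ≤ CB)
    (hK_nonneg : ∀ t, 0 ≤ K t) (hK_supp : ∀ t, L < |t| → K t = 0)
    (hK_int : ∫ t, K t = 1)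
    (b : ℕ → ℝ) (hb_pos : ∀ n, 0 < b n)
    (hb_lim : Tendsto b atTop (nhds 0))
    (hnb_lim : Tendsto (fun n : ℕ => (n : ℝ) * b n) atTop atTop) :
    (∃ C > (0 : ℝ), ∃ N : ℕ, ∀ n ≥ N, ∀ i j : Fin n,
      (n : ℝ) * b n * |smoothMat K (b n) n i j| ≤ C ∧
      ((n : ℝ) * b n * L < |((i : ℕ) : ℝ) - ((j : ℕ) : ℝ)| → smoothMat K (b n) n i j = 0)) ∧
    ∃ C₂ > (0 : ℝ), ∀ n : ℕ,
      (∀ i : Fin n, ∑ j, |smoothMat K (b n) n i j| ≤ C₂) ∧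
      (∀ j : Fin n, ∑ i, |smoothMat K (b n) n i j| ≤ C₂) := by
  obtain ⟨t₀, δ, κ, ht₀, hδ, hκ, ht₀δL, hKκ⟩ :=
    kernel_window K L hL hK_symm CK hK_lip hK_nonneg hK_supp hK_int
  have hCB : 0 < CB := lt_of_lt_of_le hκ (le_trans (hKκ t₀ le_rfl (by linarith)) (hK_bdd t₀))
  set C : ℝ := 2592 * CB ^ 2 * L ^ 2 * (2 * L + 1) / (κ ^ 2 * δ ^ 4) with hCdef
  have hC : 0 < C := by positivity
  have h1 : ∀ᶠ n : ℕ in atTop, 1 ≤ (n : ℝ) * b n := hnb_lim.eventually_ge_atTop 1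
  have h2 : ∀ᶠ n : ℕ in atTop, 6 ≤ (n : ℝ) * b n * δ := by
    filter_upwards [hnb_lim.eventually_ge_atTop (6 / δ)] with n hn
    rw [div_le_iff₀ hδ] at hn
    linarith
  have htδpos : 0 < t₀ + δ := by linarith
  have h3 : ∀ᶠ n : ℕ in atTop, b n < 1 / (4 * (t₀ + δ)) :=
    hb_lim.eventually_lt_const (by positivity)
  have h4 : ∀ᶠ n : ℕ in atTop, (2 : ℝ) ≤ (n : ℝ) := by
    filter_upwards [Filter.eventually_ge_atTop 2] with n hn
    exact_mod_cast hn
  obtain ⟨N, hN⟩ := Filter.eventually_atTop.mp (h1.and (h2.and (h3.and h4)))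
  have hcond : ∀ n ≥ N, 1 ≤ (n : ℝ) * b n ∧ 6 ≤ (n : ℝ) * b n * δ ∧
      (n : ℝ) * b n * (t₀ + δ) ≤ ((n : ℝ) - 1) / 2 := by
    intro n hn
    obtain ⟨c1, c2, c3, c4⟩ := hN n hn
    refine ⟨c1, c2, ?_⟩
    have hbn := hb_pos n
    have hn0 : (0 : ℝ) ≤ (n : ℝ) := Nat.cast_nonneg n
    have h5 : (n : ℝ) * b n * (t₀ + δ) ≤ (n : ℝ) * (1 / (4 * (t₀ + δ))) * (t₀ + δ) :=
      mul_le_mul_of_nonneg_right (mul_le_mul_of_nonneg_left c3.le hn0) htδpos.le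
    have h6 : (n : ℝ) * (1 / (4 * (t₀ + δ))) * (t₀ + δ) = (n : ℝ) / 4 := by
      field_simp
    rw [h6] at h5
    linarith
  have main : ∀ n ≥ N, ∀ i j : Fin n,
      (n : ℝ) * b n * |smoothMat K (b n) n i j| ≤ C ∧
      ((n : ℝ) * b n * L < |((i : ℕ) : ℝ) - ((j : ℕ) : ℝ)| → smoothMat K (b n) n i j = 0) := by
    intro n hn i j
    obtain ⟨c1, c2, c3⟩ := hcond n hn
    exact ⟨entry_bound K L hL hK_symm CB hK_bdd hK_nonneg hK_supp t₀ δ κ ht₀ hδ hκ ht₀δL hKκ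
        (b n) (hb_pos n) n c1 c2 c3 i j,
      fun h => smoothMat_supp K L hK_supp (b n) (hb_pos n) n i j h⟩
  refine ⟨⟨C, hC, N, main⟩, ?_⟩
  classical
  set T : ℝ := ∑ m ∈ Finset.range N, ∑ i, ∑ j, |smoothMat K (b m) m i j| with hTdef
  have hT0 : 0 ≤ T := by positivity
  have hmax : C * (2 * L + 1) ≤ max (C * (2 * L + 1)) T := le_max_left _ _
  have hmaxT : T ≤ max (C * (2 * L + 1)) T := le_max_right _ _
  refine ⟨max (C * (2 * L + 1)) T + 1, by nlinarith, ?_⟩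
  intro n
  rcases le_or_gt N n with hn | hn
  · have hrow : ∀ i : Fin n, ∑ j, |smoothMat K (b n) n i j| ≤ C * (2 * L + 1) := by
      intro i
      exact band_sum n (fun j => smoothMat K (b n) n i j) C L ((n : ℝ) * b n) hC hL
        (hcond n hn).1 (((i : ℕ) : ℝ)) (fun j => (main n hn i j).1)
        (fun j hj => (main n hn i j).2 hj)
    have hcol : ∀ j : Fin n, ∑ i, |smoothMat K (b n) n i j| ≤ C * (2 * L + 1) := by
      intro j
      exact band_sum n (fun i => smoothMat K (b n) n i j) C L ((n : ℝ) * b n) hC hL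
        (hcond n hn).1 (((j : ℕ) : ℝ)) (fun i => (main n hn i j).1)
        (fun i hi => (main n hn i j).2 (by rwa [abs_sub_comm]))
    exact ⟨fun i => (hrow i).trans (by linarith), fun j => (hcol j).trans (by linarith)⟩
  · have hmem : n ∈ Finset.range N := Finset.mem_range.2 hn
    have hfull : ∑ i, ∑ j, |smoothMat K (b n) n i j| ≤ T :=
      Finset.single_le_sum (f := fun m => ∑ i, ∑ j, |smoothMat K (b m) m i j|)
        (fun m _ => by positivity) hmem
    constructor
    · intro i
      have hr : ∑ j, |smoothMat K (b n) n i j| ≤ ∑ i', ∑ j, |smoothMat K (b n) n i' j| :=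
        Finset.single_le_sum (f := fun i' => ∑ j, |smoothMat K (b n) n i' j|)
          (fun i' _ => by positivity) (Finset.mem_univ i)
      linarith [hr.trans hfull]
    · intro j
      have hr : ∑ i, |smoothMat K (b n) n i j| ≤ ∑ i, ∑ j', |smoothMat K (b n) n i j'| :=
        Finset.sum_le_sum fun i _ =>
          Finset.single_le_sum (f := fun j' => |smoothMat K (b n) n i j'|)
            (fun j' _ => abs_nonneg _) (Finset.mem_univ j)
      linarith [hr.trans hfull]
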